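/- Comparison lemma for terminal-point increments: for x ≤ y in ℤ², (a) if x − e1 is admissible then Î_{x,y} ≥ Î_{x−e1,y} and Ĵ_{x,y} ≤ Ĵ_{x−e1,y}; (b) if x − e2 is admissible then Î_{x,y} ≤ Î_{x−e2,y} and Ĵ_{x,y} ≥ Ĵ_{x−e2,y}, where Î_{x,y} = L_{x,y} − L_{x,y−e1} and Ĵ_{x,y} = L_{x,y} − L_{x,y−e2}. -/

import Mathlib

open scoped BigOperators

/-- An up-right path of length `n` in `ℤ²`: each step is `e1 = (1,0)` or `e2 = (0,1)`. -/
def IsUpRight (n : ℕ) (π : ℕ → ℤ × ℤ) : Prop :=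
  ∀ i < n, π (i + 1) = π i + (1, 0) ∨ π (i + 1) = π i + (0, 1)

/-- The last-passage time `L_{x,y}(w)`: the supremum (a maximum over the finitely many
up-right paths from `x` to `y`, including both endpoints) of the path weight sums,
with value `⊥ = -∞` when `x ≤ y` fails (empty set of paths). -/
noncomputable def lpp (w : ℤ × ℤ → ℝ) (x y : ℤ × ℤ) : EReal :=
  sSup {s : EReal | ∃ n : ℕ, ∃ π : ℕ → ℤ × ℤ,
    π 0 = x ∧ π n = y ∧ IsUpRight n π ∧
    s = ((∑ i ∈ Finset.range (n + 1), w (π i) : ℝ) : EReal)}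

/-- Increment with respect to the initial point: `I_{x,y} = L_{x,y} - L_{x+e1,y}`. -/
noncomputable def incI (w : ℤ × ℤ → ℝ) (x y : ℤ × ℤ) : EReal :=
  lpp w x y - lpp w (x + (1, 0)) y

/-- Increment with respect to the initial point: `J_{x,y} = L_{x,y} - L_{x+e2,y}`. -/
noncomputable def incJ (w : ℤ × ℤ → ℝ) (x y : ℤ × ℤ) : EReal :=
  lpp w x y - lpp w (x + (0, 1)) y

/-- Increment with respect to the terminal point: `Î_{x,y} = L_{x,y} - L_{x,y-e1}`. -/
noncomputable def incIhat (w : ℤ × ℤ → ℝ) (x y : ℤ × ℤ) : EReal :=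
  lpp w x y - lpp w x (y - (1, 0))

/-- Increment with respect to the terminal point: `Ĵ_{x,y} = L_{x,y} - L_{x,y-e2}`. -/
noncomputable def incJhat (w : ℤ × ℤ → ℝ) (x y : ℤ × ℤ) : EReal :=
  lpp w x y - lpp w x (y - (0, 1))


/-! ### Auxiliary material -/

/-- The set of path weights from `x` to `y`. -/
def pathSet (w : ℤ × ℤ → ℝ) (x y : ℤ × ℤ) : Set EReal :=
  {s : EReal | ∃ n : ℕ, ∃ π : ℕ → ℤ × ℤ,
    π 0 = x ∧ π n = y ∧ IsUpRight n π ∧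
    s = ((∑ i ∈ Finset.range (n + 1), w (π i) : ℝ) : EReal)}

lemma lpp_def (w : ℤ × ℤ → ℝ) (x y : ℤ × ℤ) : lpp w x y = sSup (pathSet w x y) := rfl

lemma URstep {n : ℕ} {π : ℕ → ℤ × ℤ} (h : IsUpRight n π) {i : ℕ} (hi : i < n) :
    ((π (i+1)).1 = (π i).1 + 1 ∧ (π (i+1)).2 = (π i).2) ∨
    ((π (i+1)).1 = (π i).1 ∧ (π (i+1)).2 = (π i).2 + 1) := by
  rcases h i hi with h' | h' <;> [left; right] <;>
    constructor <;> rw [h'] <;> simp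

lemma URlevel {n : ℕ} {π : ℕ → ℤ × ℤ} (h : IsUpRight n π) :
    ∀ i ≤ n, (π i).1 + (π i).2 = (π 0).1 + (π 0).2 + i := by
  intro i hi
  induction i with
  | zero => simp
  | succ k ih =>
    have hk : k ≤ n := by omega
    have := ih (by omega)
    rcases URstep h (show k < n by omega) with ⟨h1, h2⟩ | ⟨h1, h2⟩ <;> rw [h1, h2] <;>
      push_cast <;> omega

lemma URmono {n : ℕ} {π : ℕ → ℤ × ℤ} (h : IsUpRight n π) :
    ∀ i j, i ≤ j → j ≤ n → (π i).1 ≤ (π j).1 ∧ (π i).2 ≤ (π j).2 := by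
  intro i j hij hjn
  induction j with
  | zero =>
    have h0 : i = 0 := by omega
    subst h0; exact ⟨le_refl _, le_refl _⟩
  | succ k ih =>
    rcases Nat.eq_or_lt_of_le hij with rfl | hlt
    · exact ⟨le_refl _, le_refl _⟩
    · have := ih (by omega) (by omega)
      rcases URstep h (show k < n by omega) with ⟨h1, h2⟩ | ⟨h1, h2⟩ <;>
        rw [h1, h2] <;> omega

lemma pathSet_nonempty (w : ℤ × ℤ → ℝ) {x y : ℤ × ℤ} (h : x ≤ y) :
    (pathSet w x y).Nonempty := by
  set a : ℕ := (y.1 - x.1).toNat with ha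
  set b : ℕ := (y.2 - x.2).toNat with hb
  have hx1 : x.1 ≤ y.1 := h.1
  have hx2 : x.2 ≤ y.2 := h.2
  refine ⟨_, a + b, fun i => if i ≤ a then (x.1 + i, x.2) else (y.1, x.2 + (i - a : ℕ)), ?_, ?_, ?_, rfl⟩
  · simp
  · by_cases hba : b = 0
    · have : a + b ≤ a := by omega
      simp only [this, if_pos]
      exact Prod.ext (by push_cast; omega) (by omega)
    · have hgt : ¬ (a + b ≤ a) := by omega
      simp only [hgt, if_neg, if_false]
      refine Prod.ext rfl ?_
      show x.2 + ((a + b - a : ℕ) : ℤ) = y.2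
      omega
  · intro i hi
    by_cases h1 : i + 1 ≤ a
    · left
      have h2 : i ≤ a := by omega
      simp only [h1, h2, if_pos]
      refine Prod.ext ?_ ?_ <;> simp <;> push_cast <;> ring
    · by_cases h2 : i ≤ a
      · right
        have hia : i = a := by omega
        simp only [h1, h2, if_pos, if_neg, if_false]
        have hxa : x.1 + (a : ℤ) = y.1 := by omega
        refine Prod.ext ?_ ?_ <;> simp [hia] <;> omega
      · right
        have h3 : ¬ (i + 1 ≤ a) := h1
        simp only [h2, h3, if_neg, if_false]
        refine Prod.ext ?_ ?_ <;> simp <;> omega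

lemma pathSet_finite (w : ℤ × ℤ → ℝ) (x y : ℤ × ℤ) : (pathSet w x y).Finite := by
  set d : ℕ := (y.1 + y.2 - x.1 - x.2).toNat with hd
  have hsub : pathSet w x y ⊆
      (fun f : Fin (d + 1) → ℤ × ℤ => ((∑ i, w (f i) : ℝ) : EReal)) ''
        (Set.pi Set.univ (fun _ : Fin (d+1) => Set.Icc x y)) := by
    rintro s ⟨n, π, h0, hn, hur, rfl⟩
    have hlev := URlevel hur n (le_refl n)
    rw [h0, hn] at hlev
    have hnd : n = d := by omega
    subst hnd
    refine ⟨fun i => π i, ?_, ?_⟩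
    · intro i _
      have hi := i.is_lt
      have h1 := URmono hur 0 i (by omega) (by omega)
      have h2 := URmono hur i d (by omega) (le_refl d)
      rw [h0] at h1; rw [hn] at h2
      exact ⟨⟨h1.1, h1.2⟩, ⟨h2.1, h2.2⟩⟩
    · simp only [EReal.coe_eq_coe_iff]
      rw [Finset.sum_range]
  exact Set.Finite.subset (Set.Finite.image _ (Set.Finite.pi (fun _ => Set.finite_Icc x y))) hsub

lemma lpp_bot (w : ℤ × ℤ → ℝ) {x y : ℤ × ℤ} (h : ¬ x ≤ y) : lpp w x y = ⊥ := by
  rw [lpp_def]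
  convert (sSup_empty : sSup (∅ : Set EReal) = ⊥)
  · rfl
  rw [Set.eq_empty_iff_forall_notMem]
  rintro s ⟨n, π, h0, hn, hur, rfl⟩
  have := URmono hur 0 n (by omega) (le_refl n)
  rw [h0, hn] at this
  exact h ⟨this.1, this.2⟩

lemma lpp_attained (w : ℤ × ℤ → ℝ) {x y : ℤ × ℤ} (h : x ≤ y) :
    ∃ n : ℕ, ∃ π : ℕ → ℤ × ℤ, π 0 = x ∧ π n = y ∧ IsUpRight n π ∧
      lpp w x y = ((∑ i ∈ Finset.range (n + 1), w (π i) : ℝ) : EReal) := by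
  have := Set.Nonempty.csSup_mem (pathSet_nonempty w h) (pathSet_finite w x y)
  obtain ⟨n, π, h0, hn, hur, heq⟩ := this
  exact ⟨n, π, h0, hn, hur, heq⟩

lemma lpp_real (w : ℤ × ℤ → ℝ) {x y : ℤ × ℤ} (h : x ≤ y) :
    ∃ r : ℝ, lpp w x y = (r : EReal) := by
  obtain ⟨n, π, _, _, _, heq⟩ := lpp_attained w h
  exact ⟨_, heq⟩

lemma sum_split (f : ℕ → ℝ) {i m : ℕ} (him : i ≤ m) :
    ∑ k ∈ Finset.range (m+1), f k
      = ∑ k ∈ Finset.range (i+1), f k + ∑ t ∈ Finset.range (m - i), f (i+1+t) := by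
  rw [show m + 1 = (i+1) + (m - i) by omega, Finset.sum_range_add]

def splice (π σ : ℕ → ℤ × ℤ) (i j : ℕ) : ℕ → ℤ × ℤ :=
  fun k => if k ≤ i then π k else σ (j + (k - i))

lemma splice_path {m n i j : ℕ} {π σ : ℕ → ℤ × ℤ}
    (hπ : IsUpRight m π) (hσ : IsUpRight n σ) (hi : i ≤ m) (hj : j ≤ n)
    (hij : π i = σ j) :
    (splice π σ i j) 0 = π 0 ∧ (splice π σ i j) (i + (n - j)) = σ n ∧
    IsUpRight (i + (n - j)) (splice π σ i j) := by
  refine ⟨?_, ?_, ?_⟩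
  · simp [splice]
  · by_cases h : n = j
    · subst h
      simp only [splice, Nat.sub_self, Nat.add_zero, if_pos (le_refl i)]
      rw [hij]
    · have h1 : ¬ (i + (n - j) ≤ i) := by omega
      simp only [splice, h1, if_neg, if_false]
      congr 1
      omega
  · intro k hk
    by_cases h1 : k + 1 ≤ i
    · have h2 : k ≤ i := by omega
      simp only [splice, h1, h2, if_pos]
      exact hπ k (by omega)
    · by_cases h2 : k ≤ i
      · have hik : k = i := by omega
        subst hik
        have hjn : j < n := by omega
        simp only [splice, h1, h2, if_pos, if_neg, if_false]
        rw [show k + 1 - k = 1 by omega, hij]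
        exact hσ j hjn
      · have h3 : ¬ (k + 1 ≤ i) := h1
        simp only [splice, h2, h3, if_neg, if_false]
        rw [show j + (k + 1 - i) = (j + (k - i)) + 1 by omega]
        exact hσ _ (by omega)

lemma splice_sum (w : ℤ × ℤ → ℝ) {n i j : ℕ} {π σ : ℕ → ℤ × ℤ} (hj : j ≤ n) :
    ∑ k ∈ Finset.range (i + (n - j) + 1), w ((splice π σ i j) k)
      = ∑ k ∈ Finset.range (i+1), w (π k) + ∑ t ∈ Finset.range (n - j), w (σ (j+1+t)) := by
  rw [show i + (n - j) + 1 = (i+1) + (n - j) by omega, Finset.sum_range_add]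
  congr 1
  · apply Finset.sum_congr rfl
    intro k hk
    have : k ≤ i := by simp at hk; omega
    simp [splice, this]
  · apply Finset.sum_congr rfl
    intro t _
    have h1 : ¬ (i + 1 + t ≤ i) := by omega
    simp only [splice, h1, if_neg, if_false]
    rw [show i + 1 + t - i = 1 + t by omega, show j + (1 + t) = j + 1 + t by omega]

lemma swap_le (w : ℤ × ℤ → ℝ) {m n i j : ℕ} {π σ : ℕ → ℤ × ℤ}
    (hπ : IsUpRight m π) (hσ : IsUpRight n σ) (hi : i ≤ m) (hj : j ≤ n)
    (hij : π i = σ j) :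
    ((∑ k ∈ Finset.range (m+1), w (π k) : ℝ) : EReal)
      + ((∑ k ∈ Finset.range (n+1), w (σ k) : ℝ) : EReal)
      ≤ sSup (pathSet w (π 0) (σ n)) + sSup (pathSet w (σ 0) (π m)) := by
  obtain ⟨e0, e1, eur⟩ := splice_path hπ hσ hi hj hij
  obtain ⟨f0, f1, fur⟩ := splice_path hσ hπ hj hi hij.symm
  have m1 : ((∑ k ∈ Finset.range (i + (n - j) + 1), w ((splice π σ i j) k) : ℝ) : EReal)
      ∈ pathSet w (π 0) (σ n) := ⟨_, _, e0, e1, eur, rfl⟩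
  have m2 : ((∑ k ∈ Finset.range (j + (m - i) + 1), w ((splice σ π j i) k) : ℝ) : EReal)
      ∈ pathSet w (σ 0) (π m) := ⟨_, _, f0, f1, fur, rfl⟩
  have key : (∑ k ∈ Finset.range (m+1), w (π k)) + (∑ k ∈ Finset.range (n+1), w (σ k))
      = (∑ k ∈ Finset.range (i + (n - j) + 1), w ((splice π σ i j) k))
        + (∑ k ∈ Finset.range (j + (m - i) + 1), w ((splice σ π j i) k)) := by
    rw [splice_sum w hj, splice_sum w hi, sum_split (fun k => w (π k)) hi,
      sum_split (fun k => w (σ k)) hj]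
    ring
  calc ((∑ k ∈ Finset.range (m+1), w (π k) : ℝ) : EReal)
        + ((∑ k ∈ Finset.range (n+1), w (σ k) : ℝ) : EReal)
      = ((∑ k ∈ Finset.range (i + (n - j) + 1), w ((splice π σ i j) k) : ℝ) : EReal)
        + ((∑ k ∈ Finset.range (j + (m - i) + 1), w ((splice σ π j i) k) : ℝ) : EReal) := by
        rw [← EReal.coe_add, ← EReal.coe_add, key]
    _ ≤ _ := add_le_add (le_sSup m1) (le_sSup m2)

lemma ivt (f : ℕ → ℤ) (k : ℕ) (hstep : ∀ t < k, f (t+1) ≤ f t + 1)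
    (h0 : f 0 ≤ 0) (hk : 0 ≤ f k) : ∃ t ≤ k, f t = 0 := by
  induction k with
  | zero => exact ⟨0, le_refl 0, le_antisymm h0 hk⟩
  | succ k ih =>
    by_cases h : 0 ≤ f k
    · obtain ⟨t, ht, hft⟩ := ih (fun t ht => hstep t (by omega)) h
      exact ⟨t, by omega, hft⟩
    · have := hstep k (by omega)
      exact ⟨k+1, le_refl _, by omega⟩

lemma cross {m n s k : ℕ} {π σ : ℕ → ℤ × ℤ} (hπ : IsUpRight m π) (hσ : IsUpRight n σ)
    (hsk : s + k ≤ m) (hkn : k ≤ n)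
    (hlev : (σ 0).1 + (σ 0).2 = (π 0).1 + (π 0).2 + s)
    (hsign : ((π s).1 ≤ (σ 0).1 ∧ (σ k).1 ≤ (π (s+k)).1)
           ∨ ((σ 0).1 ≤ (π s).1 ∧ (π (s+k)).1 ≤ (σ k).1)) :
    ∃ i j, i ≤ m ∧ j ≤ n ∧ π i = σ j := by
  have key : ∃ t ≤ k, (σ t).1 = (π (s+t)).1 := by
    rcases hsign with ⟨h1, h2⟩ | ⟨h1, h2⟩
    · have hstep : ∀ t < k, (π (s+(t+1))).1 - (σ (t+1)).1 ≤ ((π (s+t)).1 - (σ t).1) + 1 := by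
        intro t ht
        have hπs := URstep hπ (show s + t < m by omega)
        have hσs := URstep hσ (show t < n by omega)
        rw [show s + (t+1) = (s+t) + 1 by omega]
        omega
      obtain ⟨t, ht, hft⟩ := ivt (fun t => (π (s+t)).1 - (σ t).1) k hstep
        (by show (π (s+0)).1 - (σ 0).1 ≤ 0; simp only [Nat.add_zero]; omega)
        (by show 0 ≤ (π (s+k)).1 - (σ k).1; omega)
      exact ⟨t, ht, by omega⟩
    · have hstep : ∀ t < k, (σ (t+1)).1 - (π (s+(t+1))).1 ≤ ((σ t).1 - (π (s+t)).1) + 1 := by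
        intro t ht
        have hπs := URstep hπ (show s + t < m by omega)
        have hσs := URstep hσ (show t < n by omega)
        rw [show s + (t+1) = (s+t) + 1 by omega]
        omega
      obtain ⟨t, ht, hft⟩ := ivt (fun t => (σ t).1 - (π (s+t)).1) k hstep
        (by show (σ 0).1 - (π (s+0)).1 ≤ 0; simp only [Nat.add_zero]; omega)
        (by show 0 ≤ (σ k).1 - (π (s+k)).1; omega)
      exact ⟨t, ht, by omega⟩
  obtain ⟨t, ht, heq⟩ := key
  refine ⟨s + t, t, by omega, by omega, ?_⟩
  have l1 := URlevel hπ (s+t) (by omega)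
  have l2 := URlevel hσ t (by omega)
  exact Prod.ext heq.symm (by omega)

lemma quad (w : ℤ × ℤ → ℝ) {A X B Y : ℤ × ℤ} (hAY : A ≤ Y) (hXB : X ≤ B)
    (hc : (X = A + (1,0) ∧ (B = Y - (1,0) ∨ B = Y + (0,1)))
        ∨ (X = A + (0,1) ∧ (B = Y - (0,1) ∨ B = Y + (1,0)))) :
    lpp w A Y + lpp w X B ≤ lpp w A B + lpp w X Y := by
  obtain ⟨m, π, hπ0, hπm, hπ, hπs⟩ := lpp_attained w hAY
  obtain ⟨n, σ, hσ0, hσn, hσ, hσs⟩ := lpp_attained w hXB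
  have lm := URlevel hπ m (le_refl m)
  rw [hπ0, hπm] at lm
  have ln := URlevel hσ n (le_refl n)
  rw [hσ0, hσn] at ln
  have hA1 : A.1 ≤ Y.1 := hAY.1
  have hA2 : A.2 ≤ Y.2 := hAY.2
  have hX1 : X.1 ≤ B.1 := hXB.1
  have hX2 : X.2 ≤ B.2 := hXB.2
  have hcr : ∃ i j, i ≤ m ∧ j ≤ n ∧ π i = σ j := by
    rcases hc with ⟨hX, hB⟩ | ⟨hX, hB⟩
    · have hXA1 : X.1 = A.1 + 1 := by simp [hX]
      have hXA2 : X.2 = A.2 := by simp [hX]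
      rcases hB with hB | hB
      · have hB1 : B.1 = Y.1 - 1 := by simp [hB]
        have hB2 : B.2 = Y.2 := by simp [hB]
        have hm : 0 < m := by omega
        have hst := URstep hπ hm
        simp only [Nat.zero_add] at hst
        rw [hπ0] at hst
        have lv := URlevel hπ (1+n) (by omega)
        rw [hπ0] at lv
        have mo := URmono hπ (1+n) m (by omega) (le_refl m)
        rw [hπm] at mo
        apply cross (s := 1) (k := n) hπ hσ (by omega) (le_refl n)
          (by rw [hσ0, hπ0]; omega)
        refine Or.inl ⟨?_, ?_⟩
        · rw [hσ0]
          omega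
        · rw [hσn]
          omega
      · have hB1 : B.1 = Y.1 := by simp [hB]
        have hB2 : B.2 = Y.2 + 1 := by simp [hB]
        have hn1 : 1 ≤ n := by omega
        have hm : 0 < m := by omega
        have hst := URstep hπ hm
        simp only [Nat.zero_add] at hst
        rw [hπ0] at hst
        have mo := URmono hσ (n-1) n (by omega) (le_refl n)
        rw [hσn] at mo
        apply cross (s := 1) (k := n - 1) hπ hσ (by omega) (by omega)
          (by rw [hσ0, hπ0]; omega)
        refine Or.inl ⟨?_, ?_⟩
        · rw [hσ0]
          omega
        · rw [show 1 + (n-1) = m by omega, hπm]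
          omega
    · have hXA1 : X.1 = A.1 := by simp [hX]
      have hXA2 : X.2 = A.2 + 1 := by simp [hX]
      rcases hB with hB | hB
      · have hB1 : B.1 = Y.1 := by simp [hB]
        have hB2 : B.2 = Y.2 - 1 := by simp [hB]
        have hm : 0 < m := by omega
        have hst := URstep hπ hm
        simp only [Nat.zero_add] at hst
        rw [hπ0] at hst
        have mo := URmono hπ (1+n) m (by omega) (le_refl m)
        rw [hπm] at mo
        apply cross (s := 1) (k := n) hπ hσ (by omega) (le_refl n)
          (by rw [hσ0, hπ0]; omega)
        refine Or.inr ⟨?_, ?_⟩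
        · rw [hσ0]
          omega
        · rw [hσn]
          omega
      · have hB1 : B.1 = Y.1 + 1 := by simp [hB]
        have hB2 : B.2 = Y.2 := by simp [hB]
        have hn1 : 1 ≤ n := by omega
        have hm : 0 < m := by omega
        have hst := URstep hπ hm
        simp only [Nat.zero_add] at hst
        rw [hπ0] at hst
        have lvσ := URlevel hσ (n-1) (by omega)
        rw [hσ0] at lvσ
        have moσ := URmono hσ (n-1) n (by omega) (le_refl n)
        rw [hσn] at moσ
        apply cross (s := 1) (k := n - 1) hπ hσ (by omega) (by omega)
          (by rw [hσ0, hπ0]; omega)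
        refine Or.inr ⟨?_, ?_⟩
        · rw [hσ0]
          omega
        · rw [show 1 + (n-1) = m by omega, hπm]
          omega
  obtain ⟨i, j, hi, hj, hij⟩ := hcr
  have hsw := swap_le w hπ hσ hi hj hij
  rw [hπ0, hπm, hσ0, hσn] at hsw
  rw [lpp_def w A B, lpp_def w X Y, hπs, hσs]
  exact hsw

lemma sub10 (p : ℤ × ℤ) : p - (1,0) = (p.1 - 1, p.2) := by
  refine Prod.ext ?_ ?_ <;> simp

lemma sub01 (p : ℤ × ℤ) : p - (0,1) = (p.1, p.2 - 1) := by
  refine Prod.ext ?_ ?_ <;> simp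

/-- Comparison lemma for increments with respect to the terminal point:
for `x ≤ y`, moving the initial point by `−e1` decreases `Î` and increases `Ĵ`, and
moving it by `−e2` increases `Î` and decreases `Ĵ` (inequalities in the extended reals). -/
theorem stmt5 (w : ℤ × ℤ → ℝ) (x y : ℤ × ℤ) (hxy : x ≤ y) :
    (incIhat w (x - (1, 0)) y ≤ incIhat w x y ∧ incJhat w x y ≤ incJhat w (x - (1, 0)) y) ∧
    (incIhat w x y ≤ incIhat w (x - (0, 1)) y ∧ incJhat w (x - (0, 1)) y ≤ incJhat w x y) := by
  have hx1 : x.1 ≤ y.1 := hxy.1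
  have hx2 : x.2 ≤ y.2 := hxy.2
  have h1y : x - (1,0) ≤ y := by rw [sub10]; exact ⟨by simp; omega, by simp; omega⟩
  have h2y : x - (0,1) ≤ y := by rw [sub01]; exact ⟨by simp; omega, by simp; omega⟩
  have h11 : x - (1,0) ≤ y - (1,0) := by
    rw [sub10, sub10]; exact ⟨by simp; omega, by simp; omega⟩
  have h22 : x - (0,1) ≤ y - (0,1) := by
    rw [sub01, sub01]; exact ⟨by simp; omega, by simp; omega⟩
  obtain ⟨rxy, hrxy⟩ := lpp_real w hxy
  obtain ⟨r1y, hr1y⟩ := lpp_real w h1y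
  obtain ⟨r2y, hr2y⟩ := lpp_real w h2y
  obtain ⟨r11, hr11⟩ := lpp_real w h11
  obtain ⟨r22, hr22⟩ := lpp_real w h22
  refine ⟨⟨?_, ?_⟩, ⟨?_, ?_⟩⟩
  · -- (a) Î : lpp (x-e1) y - lpp (x-e1) (y-e1) ≤ lpp x y - lpp x (y-e1)
    unfold incIhat
    by_cases hc : x ≤ y - (1,0)
    · obtain ⟨ra, hra⟩ := lpp_real w hc
      have hq := quad w h1y hc (Or.inl ⟨by abel, Or.inl rfl⟩)
      rw [hr1y, hra, hr11, hrxy] at hq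
      rw [hr1y, hr11, hrxy, hra]
      rw [← EReal.coe_add, ← EReal.coe_add, EReal.coe_le_coe_iff] at hq
      rw [← EReal.coe_sub, ← EReal.coe_sub, EReal.coe_le_coe_iff]
      linarith
    · rw [lpp_bot w hc, hrxy, EReal.coe_sub_bot]
      exact le_top
  · -- (a) Ĵ : lpp x y - lpp x (y-e2) ≤ lpp (x-e1) y - lpp (x-e1) (y-e2)
    unfold incJhat
    by_cases hc : x ≤ y - (0,1)
    · have hAY : x - (1,0) ≤ y - (0,1) := by
        rw [sub01] at hc
        rw [sub10, sub01]
        obtain ⟨hcl, hcr⟩ := hc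
        exact ⟨by simp; omega, by simp; omega⟩
      obtain ⟨ra, hra⟩ := lpp_real w hc
      obtain ⟨rb, hrb⟩ := lpp_real w hAY
      have hq := quad w hAY hxy (Or.inl ⟨by abel, Or.inr (by abel)⟩)
      rw [hrb, hrxy, hr1y, hra] at hq
      rw [hrxy, hra, hr1y, hrb]
      rw [← EReal.coe_add, ← EReal.coe_add, EReal.coe_le_coe_iff] at hq
      rw [← EReal.coe_sub, ← EReal.coe_sub, EReal.coe_le_coe_iff]
      linarith
    · have hc2 : ¬ (x - (1,0) ≤ y - (0,1)) := by
        rw [sub01] at hc ⊢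
        rw [sub10]
        simp only [Prod.le_def] at hc ⊢
        simp at hc ⊢
        omega
      rw [lpp_bot w hc, lpp_bot w hc2, hrxy, hr1y, EReal.coe_sub_bot, EReal.coe_sub_bot]
  · -- (b) Î : lpp x y - lpp x (y-e1) ≤ lpp (x-e2) y - lpp (x-e2) (y-e1)
    unfold incIhat
    by_cases hc : x ≤ y - (1,0)
    · have hAY : x - (0,1) ≤ y - (1,0) := by
        rw [sub10] at hc
        rw [sub01, sub10]
        obtain ⟨hcl, hcr⟩ := hc
        exact ⟨by simp; omega, by simp; omega⟩
      obtain ⟨ra, hra⟩ := lpp_real w hc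
      obtain ⟨rb, hrb⟩ := lpp_real w hAY
      have hq := quad w hAY hxy (Or.inr ⟨by abel, Or.inr (by abel)⟩)
      rw [hrb, hrxy, hr2y, hra] at hq
      rw [hrxy, hra, hr2y, hrb]
      rw [← EReal.coe_add, ← EReal.coe_add, EReal.coe_le_coe_iff] at hq
      rw [← EReal.coe_sub, ← EReal.coe_sub, EReal.coe_le_coe_iff]
      linarith
    · have hc2 : ¬ (x - (0,1) ≤ y - (1,0)) := by
        rw [sub10] at hc ⊢
        rw [sub01]
        simp only [Prod.le_def] at hc ⊢
        simp at hc ⊢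
        omega
      rw [lpp_bot w hc, lpp_bot w hc2, hrxy, hr2y, EReal.coe_sub_bot, EReal.coe_sub_bot]
  · -- (b) Ĵ : lpp (x-e2) y - lpp (x-e2) (y-e2) ≤ lpp x y - lpp x (y-e2)
    unfold incJhat
    by_cases hc : x ≤ y - (0,1)
    · obtain ⟨ra, hra⟩ := lpp_real w hc
      have hq := quad w h2y hc (Or.inr ⟨by abel, Or.inl rfl⟩)
      rw [hr2y, hra, hr22, hrxy] at hq
      rw [hr2y, hr22, hrxy, hra]
      rw [← EReal.coe_add, ← EReal.coe_add, EReal.coe_le_coe_iff] at hq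
      rw [← EReal.coe_sub, ← EReal.coe_sub, EReal.coe_le_coe_iff]
      linarith
    · rw [lpp_bot w hc, hrxy, EReal.coe_sub_bot]
      exact le_top
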